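/- Let w ∈ S_n satisfy: w has full support, and w can be written as w = w_ℓ · w_1 ⋯ w_{k+1} where w_ℓ is a product of the k pairwise-commuting elements of D_L(w), each w_i lies in a parabolic subgroup W_{T_i} with the T_i consisting of consecutive simple reflections, and D_L(w) together with the T_i partition S. Then Supp(sw) ≠ S for every s ∈ D_L(w). -/

import Mathlib

/-- The support of `w`: the set of simple reflection indices appearing in some
(equivalently, any) reduced word for `w`. -/
def CoxeterSystem.supp {B W : Type*} [Group W] {M : CoxeterMatrix B}
    (cs : CoxeterSystem M W) (w : W) : Set B :=
  { i | ∃ ω : List B, cs.IsReduced ω ∧ cs.wordProd ω = w ∧ i ∈ ω }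

namespace Stmt19Aux

variable {m : ℕ}

def invSet (w : Equiv.Perm (Fin (m + 1))) : Finset (Fin (m + 1) × Fin (m + 1)) :=
  Finset.univ.filter (fun p => p.1 < p.2 ∧ w p.2 < w p.1)

lemma swap_lt_swap_iff (i : Fin m) (u v : Fin (m + 1)) :
    (Equiv.swap i.castSucc i.succ u < Equiv.swap i.castSucc i.succ v) ↔
      (if u = i.castSucc ∧ v = i.succ then False
       else if u = i.succ ∧ v = i.castSucc then True
       else u < v) := by
  simp only [Equiv.swap_apply_def]
  split_ifs <;>
    simp only [Fin.lt_def, Fin.ext_iff, Fin.coe_castSucc, Fin.val_succ, ne_eq,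
      iff_false, iff_true, not_lt] at * <;>
    omega

lemma invSet_swap_mul (i : Fin m) (w : Equiv.Perm (Fin (m + 1)))
    (hab : w⁻¹ i.castSucc < w⁻¹ i.succ) :
    invSet (Equiv.swap i.castSucc i.succ * w) =
      insert (w⁻¹ i.castSucc, w⁻¹ i.succ) (invSet w) := by
  set a := w⁻¹ i.castSucc with ha
  set b := w⁻¹ i.succ with hb
  have hwa : w a = i.castSucc := w.apply_symm_apply _
  have hwb : w b = i.succ := w.apply_symm_apply _
  clear_value a b
  have hanb : a ≠ b := ne_of_lt hab
  ext ⟨x, y⟩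
  simp only [invSet, Finset.mem_filter, Finset.mem_univ, true_and, Finset.mem_insert,
    Prod.mk.injEq]
  simp only [Equiv.Perm.mul_apply]
  rw [swap_lt_swap_iff i (w y) (w x)]
  have e1 : (w y = i.castSucc) ↔ y = a := by rw [← hwa, EmbeddingLike.apply_eq_iff_eq]
  have e2 : (w y = i.succ) ↔ y = b := by rw [← hwb, EmbeddingLike.apply_eq_iff_eq]
  have e3 : (w x = i.castSucc) ↔ x = a := by rw [← hwa, EmbeddingLike.apply_eq_iff_eq]
  have e4 : (w x = i.succ) ↔ x = b := by rw [← hwb, EmbeddingLike.apply_eq_iff_eq]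
  by_cases h1 : y = a ∧ x = b
  · rw [if_pos (by rw [e1, e4]; exact h1)]
    obtain ⟨rfl, rfl⟩ := h1
    simp only [and_false, false_iff]
    rintro (⟨h, -⟩ | ⟨hlt, -⟩)
    · exact hanb h.symm
    · exact absurd hab (lt_asymm hlt)
  · rw [if_neg (by rw [e1, e4]; exact h1)]
    by_cases h2 : y = b ∧ x = a
    · rw [if_pos (by rw [e2, e3]; exact h2)]
      obtain ⟨rfl, rfl⟩ := h2
      constructor
      · intro _; exact Or.inl ⟨rfl, rfl⟩
      · intro _; exact ⟨hab, trivial⟩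
    · rw [if_neg (by rw [e2, e3]; exact h2)]
      constructor
      · rintro ⟨hxy, hw⟩; exact Or.inr ⟨hxy, hw⟩
      · rintro (⟨rfl, rfl⟩ | ⟨hxy, hw⟩)
        · exact absurd ⟨rfl, rfl⟩ h2
        · exact ⟨hxy, hw⟩

lemma card_invSet_swap_mul_pos (i : Fin m) (w : Equiv.Perm (Fin (m + 1)))
    (hab : w⁻¹ i.castSucc < w⁻¹ i.succ) :
    (invSet (Equiv.swap i.castSucc i.succ * w)).card = (invSet w).card + 1 := by
  rw [invSet_swap_mul i w hab, Finset.card_insert_of_notMem]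
  simp only [invSet, Finset.mem_filter, Finset.mem_univ, true_and, not_and, not_lt]
  intro _
  rw [Equiv.Perm.inv_def, Equiv.apply_symm_apply, Equiv.apply_symm_apply]
  exact le_of_lt (Fin.castSucc_lt_succ (i := i))

lemma card_invSet_swap_mul_neg (i : Fin m) (w : Equiv.Perm (Fin (m + 1)))
    (hab : w⁻¹ i.succ < w⁻¹ i.castSucc) :
    (invSet w).card = (invSet (Equiv.swap i.castSucc i.succ * w)).card + 1 := by
  have h1 : (Equiv.swap i.castSucc i.succ * w)⁻¹ i.castSucc = w⁻¹ i.succ := by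
    rw [mul_inv_rev, Equiv.Perm.mul_apply, Equiv.swap_inv, Equiv.swap_apply_left]
  have h2 : (Equiv.swap i.castSucc i.succ * w)⁻¹ i.succ = w⁻¹ i.castSucc := by
    rw [mul_inv_rev, Equiv.Perm.mul_apply, Equiv.swap_inv, Equiv.swap_apply_right]
  have := card_invSet_swap_mul_pos i (Equiv.swap i.castSucc i.succ * w)
    (by rw [h1, h2]; exact hab)
  rwa [← mul_assoc, Equiv.swap_mul_self, one_mul] at this




lemma inv_csucc_ne_succ (i : Fin m) (w : Equiv.Perm (Fin (m + 1))) :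
    w⁻¹ i.castSucc ≠ w⁻¹ i.succ := by
  intro h
  exact absurd (w⁻¹.injective h) (ne_of_lt (Fin.castSucc_lt_succ (i := i)))

lemma invSet_one : (invSet (1 : Equiv.Perm (Fin (m + 1)))) = ∅ := by
  ext ⟨x, y⟩
  simp only [invSet, Finset.mem_filter, Finset.mem_univ, true_and, Finset.notMem_empty,
    iff_false, not_and, not_lt]
  simp only [Equiv.Perm.one_apply]
  exact le_of_lt

variable {cs : CoxeterSystem (CoxeterMatrix.Aₙ m) (Equiv.Perm (Fin (m + 1)))}

lemma card_invSet_le_length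
    (hsimple : ∀ i : Fin m, cs.simple i = Equiv.swap i.castSucc i.succ)
    (w : Equiv.Perm (Fin (m + 1))) : (invSet w).card ≤ cs.length w := by
  obtain ⟨ω, hlen, rfl⟩ := cs.exists_reduced_word w
  rw [show cs.length (cs.wordProd ω) = ω.length from hlen]
  clear hlen
  induction ω with
  | nil => rw [cs.wordProd_nil, invSet_one]; simp
  | cons j ω ih =>
    rw [cs.wordProd_cons, hsimple j, List.length_cons]
    set u := cs.wordProd ω with hu
    rcases lt_trichotomy (u⁻¹ j.castSucc) (u⁻¹ j.succ) with h | h | h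
    · rw [card_invSet_swap_mul_pos j u h]; omega
    · exact absurd h (inv_csucc_ne_succ j u)
    · have := card_invSet_swap_mul_neg j u h; omega

lemma strictMono_le_apply {n : ℕ} (f : Fin n → Fin n) (hf : StrictMono f) :
    ∀ x, x.1 ≤ (f x).1 := by
  have key : ∀ j : ℕ, ∀ x : Fin n, x.1 = j → j ≤ (f x).1 := by
    intro j
    induction j with
    | zero => intro x _; exact Nat.zero_le _
    | succ j ih =>
      intro x hx
      have hjn : j < n := by omega
      have hlt : (⟨j, hjn⟩ : Fin n) < x := by simp [Fin.lt_def, hx]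
      have := hf hlt
      have h2 := ih ⟨j, hjn⟩ rfl
      have := Fin.lt_def.mp this
      omega
  exact fun x => key x.1 x rfl

lemma length_le_card_invSet
    (hsimple : ∀ i : Fin m, cs.simple i = Equiv.swap i.castSucc i.succ) :
    ∀ n, ∀ w : Equiv.Perm (Fin (m + 1)), (invSet w).card = n → cs.length w ≤ n := by
  intro n
  induction n using Nat.strong_induction_on with
  | _ n ih =>
    intro w hw
    by_cases h1 : w = 1
    · subst h1; simp [cs.length_one]
    · have hnm : ¬ StrictMono ⇑(w⁻¹) := by
        intro hmono
        have hle := strictMono_le_apply _ hmono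
        have heq : ∀ x, w⁻¹ x = x := by
          by_contra hc
          push_neg at hc
          obtain ⟨x0, hx0⟩ := hc
          have hlt : x0.1 < (w⁻¹ x0).1 :=
            lt_of_le_of_ne (hle x0) (fun h => hx0 (Fin.ext h.symm))
          have hsum := Finset.sum_lt_sum (f := fun x : Fin (m + 1) => x.1)
            (g := fun x : Fin (m + 1) => (w⁻¹ x).1)
            (fun i _ => hle i) ⟨x0, Finset.mem_univ _, hlt⟩
          have hcomp : ∑ x : Fin (m + 1), ((w⁻¹ x) : Fin (m + 1)).1
              = ∑ x : Fin (m + 1), x.1 :=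
            Equiv.sum_comp (w⁻¹ : Equiv.Perm (Fin (m + 1))) (fun x => x.1)
          beta_reduce at hsum
          omega
        exact h1 (inv_eq_one.mp (Equiv.ext heq))
      rw [Fin.strictMono_iff_lt_succ] at hnm
      push_neg at hnm
      obtain ⟨i, hi⟩ := hnm
      have hlt : w⁻¹ i.succ < w⁻¹ i.castSucc :=
        lt_of_le_of_ne hi (fun h => inv_csucc_ne_succ i w h.symm)
      have hcard := card_invSet_swap_mul_neg i w hlt
      have hn' : (invSet (Equiv.swap i.castSucc i.succ * w)).card < n := by omega
      have hlen' := ih _ hn' (Equiv.swap i.castSucc i.succ * w) rfl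
      have heq : w = cs.simple i * (Equiv.swap i.castSucc i.succ * w) := by
        rw [hsimple i, ← mul_assoc, Equiv.swap_mul_self, one_mul]
      calc cs.length w = cs.length (cs.simple i * (Equiv.swap i.castSucc i.succ * w)) := by
            rw [← heq]
        _ ≤ cs.length (cs.simple i) + cs.length (Equiv.swap i.castSucc i.succ * w) :=
            cs.length_mul_le _ _
        _ ≤ 1 + (n - 1) := by rw [cs.length_simple]; omega
        _ ≤ n := by omega

lemma length_eq_card_invSet
    (hsimple : ∀ i : Fin m, cs.simple i = Equiv.swap i.castSucc i.succ)
    (w : Equiv.Perm (Fin (m + 1))) : cs.length w = (invSet w).card :=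
  le_antisymm (length_le_card_invSet hsimple _ w rfl) (card_invSet_le_length hsimple w)




variable {cs : CoxeterSystem (CoxeterMatrix.Aₙ m) (Equiv.Perm (Fin (m + 1)))}

lemma swap_pres (i j : Fin m) (hne : j ≠ i) (x : Fin (m + 1)) (hx : x.1 ≤ i.1) :
    ((Equiv.swap j.castSucc j.succ) x).1 ≤ i.1 := by
  have hji : j.1 ≠ i.1 := fun h => hne (Fin.ext h)
  rw [Equiv.swap_apply_def]
  split_ifs with h1 h2 <;>
    simp only [Fin.ext_iff, Fin.coe_castSucc, Fin.val_succ] at * <;> omega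

lemma pres_of_word (hsimple : ∀ i : Fin m, cs.simple i = Equiv.swap i.castSucc i.succ)
    (i : Fin m) :
    ∀ ω : List (Fin m), i ∉ ω → ∀ x : Fin (m + 1), x.1 ≤ i.1 →
      ((cs.wordProd ω) x).1 ≤ i.1 := by
  intro ω
  induction ω with
  | nil => intro _ x hx; rw [cs.wordProd_nil]; exact hx
  | cons j tl ih =>
    intro hni x hx
    have hji : j ≠ i := fun h => hni (h ▸ (List.mem_cons_self : j ∈ j :: tl))
    have hni' : i ∉ tl := fun h => hni (List.mem_cons_of_mem j h)
    rw [cs.wordProd_cons, hsimple j, Equiv.Perm.mul_apply]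
    exact swap_pres i j hji _ (ih hni' x hx)

lemma pres_inv (i : Fin m) (w : Equiv.Perm (Fin (m + 1)))
    (hp : ∀ x : Fin (m + 1), x.1 ≤ i.1 → (w x).1 ≤ i.1) :
    ∀ y : Fin (m + 1), y.1 ≤ i.1 → (w⁻¹ y).1 ≤ i.1 := by
  classical
  set S : Finset (Fin (m + 1)) := Finset.univ.filter (fun x => x.1 ≤ i.1) with hS
  have himg : S.image ⇑w ⊆ S := by
    intro y hy
    obtain ⟨x, hxS, rfl⟩ := Finset.mem_image.mp hy
    simp only [hS, Finset.mem_filter, Finset.mem_univ, true_and] at hxS ⊢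
    exact hp x hxS
  have heq : S.image ⇑w = S :=
    Finset.eq_of_subset_of_card_le himg
      (le_of_eq (Finset.card_image_of_injective S w.injective).symm)
  intro y hy
  have hyS : y ∈ S := by simp [hS, hy]
  rw [← heq] at hyS
  obtain ⟨x, hxS, hxy⟩ := Finset.mem_image.mp hyS
  rw [← hxy, Equiv.Perm.inv_def, Equiv.symm_apply_apply]
  simpa [hS] using hxS

lemma not_isLeftDescent_of_pres
    (hsimple : ∀ i : Fin m, cs.simple i = Equiv.swap i.castSucc i.succ)
    (i : Fin m) (w : Equiv.Perm (Fin (m + 1)))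
    (hp : ∀ x : Fin (m + 1), x.1 ≤ i.1 → (w x).1 ≤ i.1) :
    ¬ cs.IsLeftDescent w i := by
  intro hd
  have hinv := pres_inv i w hp
  have h1 : (w⁻¹ i.castSucc).1 ≤ i.1 := hinv _ (by simp)
  have h2 : i.1 < (w⁻¹ i.succ).1 := by
    by_contra hle
    push_neg at hle
    have := hp _ hle
    rw [Equiv.Perm.inv_def, Equiv.apply_symm_apply] at this
    simp [Fin.val_succ] at this
  have hlt : w⁻¹ i.castSucc < w⁻¹ i.succ := Fin.lt_def.2 (by omega)
  have hcard := card_invSet_swap_mul_pos i w hlt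
  unfold CoxeterSystem.IsLeftDescent at hd
  rw [hsimple i, length_eq_card_invSet hsimple, length_eq_card_invSet hsimple] at hd
  omega

lemma not_mem_reduced_word
    (hsimple : ∀ i : Fin m, cs.simple i = Equiv.swap i.castSucc i.succ) (i : Fin m) :
    ∀ ω : List (Fin m), cs.IsReduced ω →
      (∀ x : Fin (m + 1), x.1 ≤ i.1 → ((cs.wordProd ω) x).1 ≤ i.1) → i ∉ ω := by
  intro ω
  induction ω with
  | nil => simp
  | cons a ω' ih =>
    intro hred hp
    have hprod : cs.wordProd ω' = cs.simple a * cs.wordProd (a :: ω') := by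
      rw [cs.wordProd_cons, ← mul_assoc, cs.simple_mul_simple_self, one_mul]
    have hlen : cs.length (cs.wordProd (a :: ω')) = ω'.length + 1 := by
      have := hred
      unfold CoxeterSystem.IsReduced at this
      simpa using this
    have hred' : cs.IsReduced ω' := by
      unfold CoxeterSystem.IsReduced
      have hle := cs.length_wordProd_le ω'
      have hge : cs.length (cs.wordProd (a :: ω')) ≤ cs.length (cs.wordProd ω') + 1 := by
        rw [cs.wordProd_cons]
        have := cs.length_mul_le (cs.simple a) (cs.wordProd ω')
        rw [cs.length_simple] at this
        omega
      omega
    have hai : a ≠ i := by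
      rintro rfl
      refine not_isLeftDescent_of_pres hsimple a _ hp ?_
      unfold CoxeterSystem.IsLeftDescent
      rw [← hprod, hlen]
      have := cs.length_wordProd_le ω'
      omega
    have hp' : ∀ x : Fin (m + 1), x.1 ≤ i.1 → ((cs.wordProd ω') x).1 ≤ i.1 := by
      intro x hx
      rw [hprod, hsimple a, Equiv.Perm.mul_apply]
      exact swap_pres i a hai _ (hp x hx)
    intro hmem
    rcases List.mem_cons.mp hmem with h | h
    · exact hai h.symm
    · exact ih hred' hp' h

lemma exists_word_subset (T : Set (Fin m)) (u : Equiv.Perm (Fin (m + 1)))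
    (hu : u ∈ Subgroup.closure (cs.simple '' T)) :
    ∃ ω : List (Fin m), (∀ j ∈ ω, j ∈ T) ∧ cs.wordProd ω = u := by
  induction hu using Subgroup.closure_induction with
  | mem x hx =>
    obtain ⟨j, hj, rfl⟩ := hx
    exact ⟨[j], by simpa using hj, by rw [cs.wordProd_cons, cs.wordProd_nil, mul_one]⟩
  | one => exact ⟨[], by simp, cs.wordProd_nil⟩
  | mul x y hx hy ihx ihy =>
    obtain ⟨ω1, h1, e1⟩ := ihx
    obtain ⟨ω2, h2, e2⟩ := ihy
    refine ⟨ω1 ++ ω2, ?_, by rw [cs.wordProd_append, e1, e2]⟩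
    intro j hj
    rcases List.mem_append.mp hj with h | h
    · exact h1 j h
    · exact h2 j h
  | inv x hx ihx =>
    obtain ⟨ω1, h1, e1⟩ := ihx
    exact ⟨ω1.reverse, fun j hj => h1 j (List.mem_reverse.mp hj),
      by rw [cs.wordProd_reverse, e1]⟩

lemma wordProd_erase (i : Fin m) :
    ∀ ω : List (Fin m), i ∈ ω → (∀ j ∈ ω, Commute (cs.simple i) (cs.simple j)) →
      cs.wordProd ω = cs.simple i * cs.wordProd (ω.erase i) := by
  intro ω
  induction ω with
  | nil => simp
  | cons a tl ih =>
    intro hmem hcomm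
    by_cases hai : a = i
    · subst hai
      rw [List.erase_cons_head, cs.wordProd_cons]
    · have hitl : i ∈ tl := by
        rcases List.mem_cons.mp hmem with h | h
        · exact absurd h.symm hai
        · exact h
      rw [List.erase_cons_tail (by simpa using hai), cs.wordProd_cons, cs.wordProd_cons,
        ih hitl (fun j hj => hcomm j (List.mem_cons_of_mem a hj)), ← mul_assoc,
        ← (hcomm a List.mem_cons_self).eq, mul_assoc]

lemma wordProd_flatten :
    ∀ L : List (List (Fin m)), cs.wordProd L.flatten = (L.map cs.wordProd).prod := by
  intro L
  induction L with
  | nil => simp [cs.wordProd_nil]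
  | cons l L ih => simp [List.flatten_cons, cs.wordProd_append, ih]

end Stmt19Aux

/-- Let `w ∈ S_n` have full support and admit a length-additive factorization
`w = w_ℓ · w_1 ⋯ w_{k+1}` where `w_ℓ` is a product of the `k` pairwise-commuting
elements of `D_L(w)`, each `w_r` lies in a parabolic subgroup `W_{T_r}` with `T_r`
a set of consecutive simple reflections, and `D_L(w)` together with the `T_r`
partition `S`.  Then `Supp(sw) ≠ S` for every `s ∈ D_L(w)`. -/
theorem stmt_19 {m k : ℕ}
    (cs : CoxeterSystem (CoxeterMatrix.Aₙ m) (Equiv.Perm (Fin (m + 1))))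
    (hsimple : ∀ i : Fin m, cs.simple i = Equiv.swap i.castSucc i.succ)
    (w wl : Equiv.Perm (Fin (m + 1)))
    (ws : Fin (k + 1) → Equiv.Perm (Fin (m + 1)))
    (T : Fin (k + 1) → Set (Fin m))
    (hfull : cs.supp w = Set.univ)
    -- `w_ℓ` is a product of the `k` elements of `D_L(w)`
    (hwl : ∃ ω : List (Fin m), ω.Nodup ∧ ω.length = k ∧
      (∀ i : Fin m, i ∈ ω ↔ cs.IsLeftDescent w i) ∧ wl = cs.wordProd ω)
    -- the elements of `D_L(w)` pairwise commute
    (hDcomm : ∀ i j : Fin m, cs.IsLeftDescent w i → cs.IsLeftDescent w j →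
      Commute (cs.simple i) (cs.simple j))
    -- each `w_r` lies in the parabolic subgroup generated by `T_r`
    (hmem : ∀ r : Fin (k + 1), ws r ∈ Subgroup.closure (cs.simple '' T r))
    -- each `T_r` consists of consecutive simple reflections
    (hconsec : ∀ r : Fin (k + 1), ∃ a b : ℕ, T r = {j : Fin m | a ≤ j.1 ∧ j.1 ≤ b})
    -- `D_L(w)` and the `T_r` partition `S`
    (hdisj : ∀ r r' : Fin (k + 1), r ≠ r' → Disjoint (T r) (T r'))
    (hdisjD : ∀ r : Fin (k + 1), Disjoint (T r) {j : Fin m | cs.IsLeftDescent w j})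
    (hcover : (⋃ r : Fin (k + 1), T r) ∪ {j : Fin m | cs.IsLeftDescent w j} = Set.univ)
    -- the factorization itself, which is length-additive
    (hw : w = wl * (List.ofFn ws).prod)
    (hadd : cs.length w = cs.length wl + ∑ r : Fin (k + 1), cs.length (ws r)) :
    ∀ i : Fin m, cs.IsLeftDescent w i → cs.supp (cs.simple i * w) ≠ Set.univ := by
  intro i hi hcontra
  obtain ⟨ω, hnd, hlenω, hmemiff, hwleq⟩ := hwl
  have hiω : i ∈ ω := (hmemiff i).2 hi
  have hcomm : ∀ j ∈ ω, Commute (cs.simple i) (cs.simple j) :=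
    fun j hj => hDcomm i j hi ((hmemiff j).1 hj)
  choose ωr hωrT hωrP using fun r => Stmt19Aux.exists_word_subset (T r) (ws r) (hmem r)
  set W' : List (Fin m) := ω.erase i ++ (List.ofFn ωr).flatten with hW'
  have hprodW' : cs.wordProd W' = cs.simple i * w := by
    rw [hW', cs.wordProd_append, Stmt19Aux.wordProd_flatten]
    have h1 : (List.ofFn ωr).map cs.wordProd = List.ofFn ws := by
      rw [List.map_ofFn]
      exact congrArg List.ofFn (funext fun r => hωrP r)
    have h2 : cs.wordProd ω = cs.simple i * cs.wordProd (ω.erase i) :=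
      Stmt19Aux.wordProd_erase i ω hiω hcomm
    rw [h1, hw, hwleq, h2, ← mul_assoc, ← mul_assoc, cs.simple_mul_simple_self, one_mul]
  have hniW' : i ∉ W' := by
    rw [hW']
    intro hmem'
    rcases List.mem_append.mp hmem' with h | h
    · exact hnd.not_mem_erase h
    · obtain ⟨l, hl, hil⟩ := List.mem_flatten.mp h
      obtain ⟨r, rfl⟩ := List.mem_ofFn.mp hl
      exact Set.disjoint_left.mp (hdisjD r) (hωrT r i hil) hi
  have hpres := Stmt19Aux.pres_of_word hsimple i W' hniW'
  rw [hprodW'] at hpres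
  have hiuniv : i ∈ cs.supp (cs.simple i * w) := by rw [hcontra]; trivial
  obtain ⟨ω'', hred'', hprod'', hmem''⟩ := hiuniv
  exact Stmt19Aux.not_mem_reduced_word hsimple i ω'' hred''
    (by rw [hprod'']; exact hpres) hmem''
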